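/- Let Ω be a topological space, X a separable locally convex space with continuous seminorm p, X₀ a dense linear subspace of X, and f ∈ C(Ω, X). Then for every ε > 0 there exists a continuous g : Ω → X₀ such that sup_{t ∈ Ω} p(f(t) − g(t)) < ε. -/

import Mathlib

open Function TopologicalSpace

theorem stmt_15 {Ω X : Type*} [TopologicalSpace Ω] [AddCommGroup X]
    [Module ℝ X] [TopologicalSpace X] [IsTopologicalAddGroup X]
    [ContinuousSMul ℝ X] [LocallyConvexSpace ℝ X]
    [TopologicalSpace.SeparableSpace X]
    (p : Seminorm ℝ X) (hp : Continuous p)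
    (X₀ : Submodule ℝ X) (hX₀ : Dense (X₀ : Set X))
    (f : Ω → X) (hf : Continuous f) :
    ∀ ε > (0 : ℝ), ∃ g : Ω → X, Continuous g ∧ (∀ t, g t ∈ X₀) ∧
      ∀ t : Ω, p (f t - g t) < ε := by
  intro ε hε
  haveI : Nonempty X := ⟨0⟩
  set δ : ℝ := ε / 4 with hδdef
  have hδ0 : 0 < δ := by positivity
  -- a seminorm of a finite sum is at most the sum of seminorms
  have pm : ∀ (s : Finset ℕ) (v : ℕ → X), p (∑ i ∈ s, v i) ≤ ∑ i ∈ s, p (v i) := by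
    intro s v
    induction s using Finset.cons_induction with
    | empty => simp
    | cons a s ha ih =>
      rw [Finset.sum_cons, Finset.sum_cons]
      exact le_trans (map_add_le_add p _ _) (by linarith)
  -- dense sequence in X
  set x : ℕ → X := denseSeq X with hxdef
  have hx : DenseRange x := denseRange_denseSeq X
  -- approximate each x n by an element of X₀
  have hy : ∀ n : ℕ, ∃ z ∈ X₀, p (x n - z) < δ := by
    intro n
    have hopen : IsOpen {z : X | p (x n - z) < δ} :=
      isOpen_lt (hp.comp (continuous_const.sub continuous_id)) continuous_const
    have hne : {z : X | p (x n - z) < δ}.Nonempty := ⟨x n, by simp [hδ0]⟩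
    obtain ⟨z, hz1, hz2⟩ := hX₀.exists_mem_open hopen hne
    exact ⟨z, hz1, hz2⟩
  choose y hy0 hy1 using hy
  -- bump functions
  set φ : ℕ → Ω → ℝ := fun n t => min 1 (max 0 (δ - p (f t - x n))) with hφdef
  have hφcont : ∀ n, Continuous (φ n) := fun n =>
    continuous_const.min (continuous_const.max
      (continuous_const.sub (hp.comp (hf.sub continuous_const))))
  have hφnonneg : ∀ n t, 0 ≤ φ n t := fun n t =>
    le_min zero_le_one (le_max_left _ _)
  have hφle1 : ∀ n t, φ n t ≤ 1 := fun n t => min_le_left _ _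
  have hφpos : ∀ n t, 0 < φ n t ↔ p (f t - x n) < δ := by
    intro n t
    simp [hφdef, lt_min_iff, lt_max_iff, sub_pos]
  have hcover : ∀ t, ∃ n, 0 < φ n t := by
    intro t
    have hopen : IsOpen {z : X | p (f t - z) < δ} :=
      isOpen_lt (hp.comp (continuous_const.sub continuous_id)) continuous_const
    obtain ⟨n, hn⟩ := hx.exists_mem_open hopen ⟨f t, by simp [hδ0]⟩
    exact ⟨n, (hφpos n t).2 hn⟩
  -- Mather's trick: locally finite family
  set ψ : ℕ → Ω → ℝ := fun n t => max 0 (φ n t - n * ∑ k ∈ Finset.range n, φ k t)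
    with hψdef
  have hψcont : ∀ n, Continuous (ψ n) := fun n =>
    continuous_const.max ((hφcont n).sub
      (continuous_const.mul (continuous_finset_sum _ fun k _ => hφcont k)))
  have hψnonneg : ∀ n t, 0 ≤ ψ n t := fun n t => le_max_left _ _
  have hψle : ∀ n t, ψ n t ≤ φ n t := by
    intro n t
    refine max_le (hφnonneg n t) ?_
    have h1 : 0 ≤ (n : ℝ) * ∑ k ∈ Finset.range n, φ k t := by
      apply mul_nonneg (Nat.cast_nonneg n)
      exact Finset.sum_nonneg fun k _ => hφnonneg k t
    linarith
  -- key local finiteness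
  have key : ∀ t : Ω, ∃ V ∈ nhds t, ∃ N : ℕ,
      ∀ n, N ≤ n → ∀ s ∈ V, ψ n s = 0 := by
    intro t
    obtain ⟨m, hm⟩ := hcover t
    obtain ⟨n₀, hn₀⟩ := exists_nat_ge (2 / φ m t)
    refine ⟨{s | φ m t / 2 < φ m s}, ?_, max (m + 1) n₀, ?_⟩
    · exact (isOpen_lt continuous_const (hφcont m)).mem_nhds (by simpa using by linarith)
    · intro n hn s hs
      have hmn : m < n := lt_of_lt_of_le (Nat.lt_succ_self m) (le_trans (le_max_left _ _) hn)
      have hn₀n : (n₀ : ℝ) ≤ n := Nat.cast_le.2 (le_trans (le_max_right _ _) hn)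
      have hsum : φ m s ≤ ∑ k ∈ Finset.range n, φ k s :=
        Finset.single_le_sum (fun k _ => hφnonneg k s) (Finset.mem_range.2 hmn)
      have hs' : φ m t / 2 < φ m s := hs
      have h1 : (1 : ℝ) ≤ (n : ℝ) * ∑ k ∈ Finset.range n, φ k s := by
        have h2 : 2 / φ m t * (φ m t / 2) = 1 := by
          field_simp
        calc (1 : ℝ) = 2 / φ m t * (φ m t / 2) := h2.symm
          _ ≤ (n : ℝ) * (φ m t / 2) := by
              apply mul_le_mul_of_nonneg_right (le_trans hn₀ hn₀n) (by linarith)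
          _ ≤ (n : ℝ) * ∑ k ∈ Finset.range n, φ k s := by
              apply mul_le_mul_of_nonneg_left (le_trans (le_of_lt hs') hsum)
                (Nat.cast_nonneg n)
      have : φ n s - n * ∑ k ∈ Finset.range n, φ k s ≤ 0 := by
        have := hφle1 n s
        linarith
      exact max_eq_left this
  -- local finiteness of the supports
  have hLF : LocallyFinite fun n => support fun s => ψ n s := by
    intro t
    obtain ⟨V, hV, N, hN⟩ := key t
    refine ⟨V, hV, Set.Finite.subset (Set.finite_Iio N) ?_⟩
    rintro n ⟨s, hs1, hs2⟩
    by_contra hcon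
    exact hs1 (hN n (le_of_not_gt hcon) s hs2)
  -- the sum σ
  set σ : Ω → ℝ := fun t => ∑ᶠ n, ψ n t with hσdef
  have hσcont : Continuous σ := continuous_finsum hψcont hLF
  have hσ_eq : ∀ (t : Ω) (N : ℕ), (∀ n, N ≤ n → ψ n t = 0) →
      σ t = ∑ n ∈ Finset.range N, ψ n t := by
    intro t N hN
    apply finsum_eq_sum_of_support_subset
    intro n hn
    simp only [Finset.coe_range, Set.mem_Iio]
    by_contra hcon
    exact hn (hN n (le_of_not_gt hcon))
  have hσpos : ∀ t, 0 < σ t := by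
    intro t
    obtain ⟨V, hV, N, hN⟩ := key t
    have htV : t ∈ V := mem_of_mem_nhds hV
    rw [hσ_eq t N fun n hn => hN n hn t htV]
    set m := Nat.find (hcover t) with hmdef
    have hm : 0 < φ m t := Nat.find_spec (hcover t)
    have hψm : ψ m t = φ m t := by
      have hzero : ∑ k ∈ Finset.range m, φ k t = 0 := by
        apply Finset.sum_eq_zero
        intro k hk
        exact le_antisymm (not_lt.1 (Nat.find_min (hcover t) (Finset.mem_range.1 hk)))
          (hφnonneg k t)
      rw [hψdef]
      simp only [hzero, mul_zero, sub_zero]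
      exact max_eq_right (le_of_lt hm)
    have hmN : m < N := by
      by_contra hcon
      have := hN m (le_of_not_gt hcon) t htV
      rw [hψm] at this
      linarith
    exact Finset.sum_pos' (fun i _ => hψnonneg i t)
      ⟨m, Finset.mem_range.2 hmN, by rw [hψm]; exact hm⟩
  -- the approximating function
  refine ⟨fun t => ∑ᶠ n, (ψ n t / σ t) • y n, ?_, ?_, ?_⟩
  · -- continuity
    apply continuous_finsum
    · intro n
      exact (((hψcont n).div hσcont fun t => (hσpos t).ne').smul continuous_const)
    · apply hLF.subset
      intro n t ht
      simp only [mem_support] at ht ⊢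
      intro hcon
      apply ht
      show (ψ n t / σ t) • y n = 0
      rw [hcon]
      simp
  · -- membership in X₀
    intro t
    obtain ⟨V, hV, N, hN⟩ := key t
    have htV : t ∈ V := mem_of_mem_nhds hV
    have hsupp : (support fun n => (ψ n t / σ t) • y n) ⊆ ↑(Finset.range N) := by
      intro n hn
      simp only [Finset.coe_range, Set.mem_Iio]
      by_contra hcon
      apply hn
      show (ψ n t / σ t) • y n = 0
      rw [hN n (le_of_not_gt hcon) t htV]
      simp
    show ∑ᶠ n, (ψ n t / σ t) • y n ∈ X₀
    rw [finsum_eq_sum_of_support_subset _ hsupp]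
    exact Submodule.sum_mem _ fun n _ => Submodule.smul_mem _ _ (hy0 n)
  · -- the estimate
    intro t
    obtain ⟨V, hV, N, hN⟩ := key t
    have htV : t ∈ V := mem_of_mem_nhds hV
    have hNt : ∀ n, N ≤ n → ψ n t = 0 := fun n hn => hN n hn t htV
    have hsupp : (support fun n => (ψ n t / σ t) • y n) ⊆ ↑(Finset.range N) := by
      intro n hn
      simp only [Finset.coe_range, Set.mem_Iio]
      by_contra hcon
      apply hn
      show (ψ n t / σ t) • y n = 0
      rw [hNt n (le_of_not_gt hcon)]
      simp
    show p (f t - ∑ᶠ n, (ψ n t / σ t) • y n) < ε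
    rw [finsum_eq_sum_of_support_subset _ hsupp]
    have hsum1 : ∑ n ∈ Finset.range N, ψ n t / σ t = 1 := by
      rw [← Finset.sum_div, ← hσ_eq t N hNt]
      exact div_self (hσpos t).ne'
    have hft : f t = ∑ n ∈ Finset.range N, (ψ n t / σ t) • f t := by
      rw [← Finset.sum_smul, hsum1, one_smul]
    have hdiff : f t - ∑ n ∈ Finset.range N, (ψ n t / σ t) • y n
        = ∑ n ∈ Finset.range N, (ψ n t / σ t) • (f t - y n) := by
      conv_lhs => rw [hft]
      rw [← Finset.sum_sub_distrib]
      exact Finset.sum_congr rfl fun n _ => (smul_sub _ _ _).symm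
    rw [hdiff]
    have hterm : ∀ n ∈ Finset.range N,
        p ((ψ n t / σ t) • (f t - y n)) ≤ (ψ n t / σ t) * (2 * δ) := by
      intro n _
      have hc : 0 ≤ ψ n t / σ t := div_nonneg (hψnonneg n t) (le_of_lt (hσpos t))
      rw [map_smul_eq_mul, Real.norm_eq_abs, abs_of_nonneg hc]
      rcases eq_or_lt_of_le (hψnonneg n t) with h0 | h0
      · rw [← h0]
        simp
      · have hφn : 0 < φ n t := lt_of_lt_of_le h0 (hψle n t)
        have h1 : p (f t - x n) < δ := (hφpos n t).1 hφn
        have h2 : p (f t - y n) ≤ p (f t - x n) + p (x n - y n) := by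
          have : f t - y n = (f t - x n) + (x n - y n) := by abel
          rw [this]
          exact map_add_le_add p _ _
        have h3 : p (f t - y n) ≤ 2 * δ := by linarith [hy1 n]
        exact mul_le_mul_of_nonneg_left h3 hc
    calc p (∑ n ∈ Finset.range N, (ψ n t / σ t) • (f t - y n))
        ≤ ∑ n ∈ Finset.range N, p ((ψ n t / σ t) • (f t - y n)) := pm _ _
      _ ≤ ∑ n ∈ Finset.range N, (ψ n t / σ t) * (2 * δ) := Finset.sum_le_sum hterm
      _ = 2 * δ := by rw [← Finset.sum_mul, hsum1, one_mul]
      _ < ε := by rw [hδdef]; linarith
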